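/- For the sequence σ(n) = 2^{-⌊log_2 n⌋} and τ the nonincreasing rearrangement of its d-th tensor power, one has limsup_{n→∞} τ(n)·n/(log n)^{d-1} = 2·(log_2 e)^{d-1}/(d-1)! and liminf_{n→∞} τ(n)·n/(log n)^{d-1} = (log_2 e)^{d-1}/(d-1)!. In particular, for d ≥ 2, c_1^d/(d-1)! < c_d < C_d < C_1^d/(d-1)!, where C_1 = limsup σ(n)n = 2 and c_1 = liminf σ(n)n = 1. -/

import Mathlib

open Filter Real Set

namespace Stmt12



/-- Cumulative count function. -/
def M (e k : ℕ) : ℕ := ∑ j ∈ Finset.range (k+1), 2^j * (j+e).choose e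

lemma M_zero (e : ℕ) : M e 0 = 1 := by simp [M]

lemma geom_sum_two (n : ℕ) : ∑ j ∈ Finset.range n, 2^j = 2^n - 1 := by
  induction n with
  | zero => simp
  | succ n ih =>
    rw [Finset.sum_range_succ, ih]
    have : 1 ≤ 2^n := Nat.one_le_two_pow
    omega

lemma M_zero_e (k : ℕ) : M 0 k = 2^(k+1) - 1 := by
  simp only [M, Nat.choose_self, Nat.add_zero, Nat.choose_zero_right, mul_one]
  exact geom_sum_two (k+1)

lemma M_rec (e k : ℕ) : M (e+1) (k+1) = M e (k+1) + 2 * M (e+1) k := by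
  have pascal : ∀ j : ℕ, (j + (e+1)).choose (e+1)
      = (j + e).choose e + (j + e).choose (e+1) := by
    intro j
    have : j + (e+1) = (j + e) + 1 := by omega
    rw [this, Nat.choose_succ_succ' (j+e) e]
  have h1 : M (e+1) (k+1)
      = ∑ j ∈ Finset.range (k+2), 2^j * (j+e).choose e
        + ∑ j ∈ Finset.range (k+2), 2^j * (j+e).choose (e+1) := by
    rw [M, ← Finset.sum_add_distrib]
    congr 1; ext j; rw [pascal j, Nat.mul_add]
  have h2 : ∑ j ∈ Finset.range (k+2), 2^j * (j+e).choose (e+1)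
      = 2 * M (e+1) k := by
    rw [Finset.sum_range_succ' (fun j => 2^j * (j+e).choose (e+1)) (k+1)]
    have : (0 + e).choose (e+1) = 0 := Nat.choose_eq_zero_of_lt (by omega)
    rw [this, Nat.mul_zero, Nat.add_zero, M, Finset.mul_sum]
    congr 1; ext j
    have : j + 1 + e = j + (e+1) := by omega
    rw [this]; ring
  rw [h1, h2]
  have : M e (k+1) = ∑ j ∈ Finset.range (k+2), 2^j * (j+e).choose e := rfl
  rw [this]

lemma M_strictMono (e : ℕ) : StrictMono (M e) := by
  apply strictMono_nat_of_lt_succ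
  intro k
  have : M e (k+1) = M e k + 2^(k+1) * ((k+1)+e).choose e := Finset.sum_range_succ _ _
  have hpos : 0 < 2^(k+1) * ((k+1)+e).choose e :=
    Nat.mul_pos (Nat.pow_pos (by norm_num)) (Nat.choose_pos (by omega))
  omega

lemma M_pos (e k : ℕ) : 0 < M e k :=
  lt_of_lt_of_le (by rw [M_zero]; norm_num) ((M_strictMono e).monotone (Nat.zero_le k))

lemma pow_le_M (e k : ℕ) : 2^k ≤ M e k := by
  have : 2^k * ((k)+e).choose e ≤ M e k := by
    rw [M, Finset.sum_range_succ]
    exact Nat.le_add_left _ _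
  have h2 : 1 ≤ (k+e).choose e := Nat.choose_pos (by omega)
  calc 2^k = 2^k * 1 := by ring
    _ ≤ 2^k * (k+e).choose e := Nat.mul_le_mul_left _ h2
    _ ≤ M e k := this

lemma asc_le (m : ℕ) : ∀ e : ℕ, (m+1).ascFactorial e ≤ (m+e)^e
  | 0 => le_refl 1
  | e+1 => by
    rw [Nat.ascFactorial_succ]
    calc (m+1+e) * (m+1).ascFactorial e ≤ (m+(e+1)) * (m+e)^e :=
          Nat.mul_le_mul (by omega) (asc_le m e)
      _ ≤ (m+(e+1)) * (m+(e+1))^e :=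
          Nat.mul_le_mul_left _ (Nat.pow_le_pow_left (by omega) e)
      _ = (m+(e+1))^(e+1) := (pow_succ' _ _).symm


lemma choose_le (e m : ℕ) : (m + e).choose e ≤ (m + e)^e := by
  calc (m+e).choose e ≤ (m+e).choose e * e.factorial := Nat.le_mul_of_pos_right _ e.factorial_pos
    _ = e.factorial * (m+e).choose e := by ring
    _ = (m+1).ascFactorial e := (Nat.ascFactorial_eq_factorial_mul_choose m e).symm
    _ ≤ (m+e)^e := asc_le m e
lemma M_le (e k : ℕ) : M e k ≤ 2^(k+1) * (k+e)^e := by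
  have h : M e k ≤ ∑ j ∈ Finset.range (k+1), 2^j * (k+e)^e := by
    apply Finset.sum_le_sum
    intro j hj
    apply Nat.mul_le_mul_left
    calc (j+e).choose e ≤ (j+e)^e := choose_le e j
      _ ≤ (k+e)^e := by
          have hj' : j < k + 1 := Finset.mem_range.mp hj
          exact Nat.pow_le_pow_left (by omega) e
  calc M e k ≤ ∑ j ∈ Finset.range (k+1), 2^j * (k+e)^e := h
    _ = (∑ j ∈ Finset.range (k+1), 2^j) * (k+e)^e := by rw [Finset.sum_mul]
    _ = (2^(k+1) - 1) * (k+e)^e := by rw [geom_sum_two]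
    _ ≤ 2^(k+1) * (k+e)^e := Nat.mul_le_mul_right _ (Nat.sub_le _ _)




-- log helper lemmas
lemma log_le_iff' (k : ℕ) (n : ℕ+) : Nat.log 2 (n:ℕ) ≤ k ↔ (n:ℕ) < 2^(k+1) := by
  rw [← Nat.log_lt_iff_lt_pow (by norm_num) n.ne_zero]
  omega

lemma log_two_mul (n : ℕ) (hn : n ≠ 0) : Nat.log 2 (2 * n) = Nat.log 2 n + 1 := by
  rw [mul_comm]; exact Nat.log_mul_base (by norm_num) hn

lemma log_two_mul_add_one (n : ℕ) (hn : n ≠ 0) :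
    Nat.log 2 (2 * n + 1) = Nat.log 2 n + 1 := by
  have h1 : Nat.log 2 ((2 * n + 1) / 2) = Nat.log 2 (2 * n + 1) - 1 := Nat.log_div_base _ _
  have h2 : (2 * n + 1) / 2 = n := by omega
  have h3 : 0 < Nat.log 2 (2 * n + 1) := Nat.log_pos (by norm_num) (by omega)
  rw [h2] at h1
  omega

lemma log_eq_zero (n : ℕ+) (h : Nat.log 2 (n:ℕ) = 0) : n = 1 := by
  rcases Nat.log_eq_zero_iff.mp h with h2 | h2
  · have h1 : 0 < (n:ℕ) := n.pos
    have : (n:ℕ) = 1 := by omega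
    exact PNat.coe_eq_one_iff.mp this
  · exact absurd h2 (by norm_num)

def S (d k : ℕ) : Set (Fin d → ℕ+) := {x | ∑ j, Nat.log 2 ((x j : ℕ)) ≤ k}

lemma pnat_lt_finite (N : ℕ) : {n : ℕ+ | (n:ℕ) < N}.Finite := by
  have : {n : ℕ+ | (n:ℕ) < N} = ((↑) : ℕ+ → ℕ) ⁻¹' (Set.Iio N) := rfl
  rw [this]
  exact Set.Finite.preimage (Set.injOn_of_injective PNat.coe_injective)
    (Set.finite_Iio N)

lemma S_finite (d k : ℕ) : (S d k).Finite := by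
  apply Set.Finite.subset (Set.Finite.pi
    (fun _ : Fin d => pnat_lt_finite (2^(k+1))))
  intro x hx
  rw [Set.mem_univ_pi]
  intro j
  have h1 : Nat.log 2 ((x j : ℕ)) ≤ k :=
    le_trans (Finset.single_le_sum (f := fun i => Nat.log 2 ((x i : ℕ)))
      (fun _ _ => Nat.zero_le _) (Finset.mem_univ j)) hx
  exact (log_le_iff' k (x j)).mp h1

lemma ncard_pnat_lt (N : ℕ) : {n : ℕ+ | (n:ℕ) < N}.ncard = N - 1 := by
  rw [← Set.ncard_image_of_injective _ PNat.coe_injective]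
  have himg : ((↑) : ℕ+ → ℕ) '' {n : ℕ+ | (n:ℕ) < N} = Set.Ioo 0 N := by
    ext m
    simp only [Set.mem_image, Set.mem_setOf_eq, Set.mem_Ioo]
    constructor
    · rintro ⟨n, hn, rfl⟩; exact ⟨n.pos, hn⟩
    · rintro ⟨h0, hN⟩; exact ⟨⟨m, h0⟩, hN, rfl⟩
  rw [himg, ← Finset.coe_Ioo, Set.ncard_coe_finset, Nat.card_Ioo]
  omega

lemma ncard_pnat_le (N : ℕ) : {n : ℕ+ | (n:ℕ) ≤ N}.ncard = N := by
  have : {n : ℕ+ | (n:ℕ) ≤ N} = {n : ℕ+ | (n:ℕ) < N + 1} := by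
    ext n; simp [Nat.lt_succ_iff]
  rw [this, ncard_pnat_lt]
  omega


lemma sum_log_succ {d : ℕ} (x : Fin (d+1) → ℕ+) :
    ∑ j, Nat.log 2 ((x j : ℕ))
      = Nat.log 2 ((x 0 : ℕ)) + ∑ j, Nat.log 2 ((Fin.tail x j : ℕ)) := by
  rw [Fin.sum_univ_succ]
  rfl

lemma countS : ∀ d k, (S (d+1) k).ncard = M d k := by
  intro d
  induction d with
  | zero =>
    intro k
    have hinj : Function.Injective (fun x : Fin 1 → ℕ+ => x 0) := by
      intro x y hxy
      funext j
      have hj : j = 0 := Subsingleton.elim _ _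
      rw [hj]; exact hxy
    have himg : (fun x : Fin 1 → ℕ+ => x 0) '' S 1 k = {n : ℕ+ | (n:ℕ) < 2^(k+1)} := by
      ext n
      simp only [Set.mem_image, S, Set.mem_setOf_eq]
      constructor
      · rintro ⟨x, hx, rfl⟩
        rw [Fin.sum_univ_one] at hx
        exact (log_le_iff' k (x 0)).mp hx
      · intro hn
        exact ⟨fun _ => n, by rw [Fin.sum_univ_one]; exact (log_le_iff' k n).mpr hn, rfl⟩
    rw [← Set.ncard_image_of_injective (S 1 k) hinj, himg, ncard_pnat_lt, M_zero_e]
  | succ d ih =>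
    intro k
    induction k with
    | zero =>
      have hset : S (d+2) 0 = {(fun _ => 1 : Fin (d+2) → ℕ+)} := by
        ext x
        simp only [S, Set.mem_setOf_eq, Set.mem_singleton_iff, Nat.le_zero]
        constructor
        · intro hx
          funext j
          exact log_eq_zero _ ((Finset.sum_eq_zero_iff.mp hx) j (Finset.mem_univ j))
        · rintro rfl
          simp
      rw [hset, Set.ncard_singleton, M_zero]
    | succ k ihk =>
      set h0 : (Fin (d+2) → ℕ+) → (Fin (d+2) → ℕ+) :=
        fun x => Fin.cons (2 * x 0) (Fin.tail x) with hh0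
      set h1 : (Fin (d+2) → ℕ+) → (Fin (d+2) → ℕ+) :=
        fun x => Fin.cons (2 * x 0 + 1) (Fin.tail x) with hh1
      set A : Set (Fin (d+2) → ℕ+) := Fin.cons (1 : ℕ+) '' S (d+1) (k+1) with hA
      set B0 : Set (Fin (d+2) → ℕ+) := h0 '' S (d+2) k with hB0
      set B1 : Set (Fin (d+2) → ℕ+) := h1 '' S (d+2) k with hB1
      -- membership characterizations at coordinate 0
      have memA : ∀ x ∈ A, (x 0 : ℕ) = 1 := by
        rintro x ⟨y, _, rfl⟩; simp [Fin.cons_zero]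
      have memB0 : ∀ x ∈ B0, ∃ m : ℕ, 0 < m ∧ (x 0 : ℕ) = 2 * m := by
        rintro x ⟨y, _, rfl⟩
        exact ⟨(y 0 : ℕ), (y 0).pos, by simp [hh0, Fin.cons_zero]⟩
      have memB1 : ∀ x ∈ B1, ∃ m : ℕ, 0 < m ∧ (x 0 : ℕ) = 2 * m + 1 := by
        rintro x ⟨y, _, rfl⟩
        exact ⟨(y 0 : ℕ), (y 0).pos, by simp [hh1, Fin.cons_zero]⟩
      -- the decomposition
      have hdecomp : S (d+2) (k+1) = A ∪ (B0 ∪ B1) := by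
        ext x
        constructor
        · intro hx
          have hx' : Nat.log 2 ((x 0 : ℕ)) + ∑ j, Nat.log 2 ((Fin.tail x j : ℕ)) ≤ k + 1 := by
            rw [← sum_log_succ]; exact hx
          have hpos : 0 < (x 0 : ℕ) := (x 0).pos
          rcases Nat.lt_or_ge (x 0 : ℕ) 2 with h2 | h2
          · -- x 0 = 1
            left
            refine ⟨Fin.tail x, ?_, ?_⟩
            · have hlog : Nat.log 2 ((x 0 : ℕ)) = 0 := by
                rw [Nat.log_eq_zero_iff]; left; omega
              simp only [S, Set.mem_setOf_eq]
              omega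
            · have hone : x 0 = 1 := by
                have : (x 0 : ℕ) = 1 := by omega
                exact PNat.coe_eq_one_iff.mp this
              rw [← hone]
              exact Fin.cons_self_tail x
          · right
            -- x 0 ≥ 2; split on parity
            have hm : ∃ m : ℕ, 0 < m ∧ ((x 0 : ℕ) = 2 * m ∨ (x 0 : ℕ) = 2 * m + 1) := by
              refine ⟨(x 0 : ℕ) / 2, by omega, by omega⟩
            obtain ⟨m, hmpos, hcase⟩ := hm
            set mp : ℕ+ := ⟨m, hmpos⟩ with hmp
            have hmcoe : (mp : ℕ) = m := rfl
            set y : Fin (d+2) → ℕ+ := Fin.cons mp (Fin.tail x) with hy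
            have hy0 : y 0 = mp := Fin.cons_zero _ _
            have hytail : Fin.tail y = Fin.tail x := Fin.tail_cons _ _
            have hysum : ∑ j, Nat.log 2 ((y j : ℕ))
                = Nat.log 2 m + ∑ j, Nat.log 2 ((Fin.tail x j : ℕ)) := by
              rw [sum_log_succ, hy0, hytail, hmcoe]
            rcases hcase with hcase | hcase
            · left
              refine ⟨y, ?_, ?_⟩
              · have : Nat.log 2 ((x 0 : ℕ)) = Nat.log 2 m + 1 := by
                  rw [hcase]; exact log_two_mul m (by omega)
                simp only [S, Set.mem_setOf_eq]
                rw [hysum]; omega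
              · show Fin.cons (2 * y 0) (Fin.tail y) = x
                rw [hy0, hytail]
                have h20 : (2 * mp : ℕ+) = x 0 := by
                  apply PNat.coe_injective
                  rw [PNat.mul_coe, hmcoe, hcase]; rfl
                rw [h20]
                exact Fin.cons_self_tail x
            · right
              refine ⟨y, ?_, ?_⟩
              · have : Nat.log 2 ((x 0 : ℕ)) = Nat.log 2 m + 1 := by
                  rw [hcase]; exact log_two_mul_add_one m (by omega)
                simp only [S, Set.mem_setOf_eq]
                rw [hysum]; omega
              · show Fin.cons (2 * y 0 + 1) (Fin.tail y) = x
                rw [hy0, hytail]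
                have h20 : (2 * mp + 1 : ℕ+) = x 0 := by
                  apply PNat.coe_injective
                  rw [PNat.add_coe, PNat.mul_coe, hmcoe, hcase]; rfl
                rw [h20]
                exact Fin.cons_self_tail x
        · intro hx
          rcases hx with ⟨y, hyS, rfl⟩ | ⟨y, hyS, rfl⟩ | ⟨y, hyS, rfl⟩
          · -- A ⊆ S
            simp only [S, Set.mem_setOf_eq] at hyS ⊢
            rw [sum_log_succ, Fin.cons_zero, Fin.tail_cons]
            simpa using hyS
          · -- B0
            simp only [S, Set.mem_setOf_eq, hh0] at hyS ⊢
            rw [sum_log_succ] at hyS ⊢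
            rw [Fin.cons_zero, Fin.tail_cons]
            have : Nat.log 2 ((2 * y 0 : ℕ+) : ℕ) = Nat.log 2 ((y 0 : ℕ)) + 1 := by
              rw [PNat.mul_coe]
              exact log_two_mul _ (y 0).ne_zero
            rw [this]
            omega
          · -- B1
            simp only [S, Set.mem_setOf_eq, hh1] at hyS ⊢
            rw [sum_log_succ] at hyS ⊢
            rw [Fin.cons_zero, Fin.tail_cons]
            have : Nat.log 2 ((2 * y 0 + 1 : ℕ+) : ℕ) = Nat.log 2 ((y 0 : ℕ)) + 1 := by
              rw [PNat.add_coe, PNat.mul_coe]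
              exact log_two_mul_add_one _ (y 0).ne_zero
            rw [this]
            omega
      -- injectivity
      have hinj0 : Function.Injective h0 := by
        intro x y hxy
        have ht : Fin.tail x = Fin.tail y := by
          have := congrArg Fin.tail hxy
          rwa [hh0, Fin.tail_cons, Fin.tail_cons] at this
        have h00 : (2 : ℕ+) * x 0 = 2 * y 0 := by
          have := congrFun hxy 0
          simpa [hh0, Fin.cons_zero] using this
        have hx0 : x 0 = y 0 := mul_left_cancel h00
        rw [← Fin.cons_self_tail x, ← Fin.cons_self_tail y, hx0, ht]
      have hinj1 : Function.Injective h1 := by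
        intro x y hxy
        have ht : Fin.tail x = Fin.tail y := by
          have := congrArg Fin.tail hxy
          rwa [hh1, Fin.tail_cons, Fin.tail_cons] at this
        have h00 : (2 : ℕ+) * x 0 + 1 = 2 * y 0 + 1 := by
          have := congrFun hxy 0
          simpa [hh1, Fin.cons_zero] using this
        have hx0 : x 0 = y 0 := mul_left_cancel (add_right_cancel h00)
        rw [← Fin.cons_self_tail x, ← Fin.cons_self_tail y, hx0, ht]
      -- disjointness
      have hd1 : Disjoint B0 B1 := by
        rw [Set.disjoint_left]
        intro x hx0' hx1'
        obtain ⟨m, hm, he⟩ := memB0 x hx0'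
        obtain ⟨m', hm', ho⟩ := memB1 x hx1'
        omega
      have hd2 : Disjoint A (B0 ∪ B1) := by
        rw [Set.disjoint_left]
        intro x hxA hxB
        have h1' := memA x hxA
        rcases hxB with hxB | hxB
        · obtain ⟨m, hm, he⟩ := memB0 x hxB; omega
        · obtain ⟨m, hm, he⟩ := memB1 x hxB; omega
      -- finiteness
      have hfA : A.Finite := (S_finite (d+1) (k+1)).image _
      have hfB0 : B0.Finite := (S_finite (d+2) k).image _
      have hfB1 : B1.Finite := (S_finite (d+2) k).image _
      -- compute
      rw [hdecomp, Set.ncard_union_eq hd2 hfA (hfB0.union hfB1),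
        Set.ncard_union_eq hd1 hfB0 hfB1]
      rw [hA, hB0, hB1]
      rw [Set.ncard_image_of_injective _
          (Fin.cons_right_injective (α := fun _ : Fin (d+2) => ℕ+) (1 : ℕ+)),
        Set.ncard_image_of_injective _ hinj0, Set.ncard_image_of_injective _ hinj1]
      rw [ih (k+1), ihk, M_rec]
      ring

lemma half_pow_le_iff {a b : ℕ} : (1/2:ℝ)^a ≤ (1/2:ℝ)^b ↔ b ≤ a := by
  constructor
  · intro h
    by_contra hab
    push_neg at hab
    exact absurd ((pow_lt_pow_iff_right_of_lt_one₀ (by norm_num) (by norm_num)).mpr hab)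
      (not_lt.mpr h)
  · intro h
    exact pow_le_pow_of_le_one (by norm_num) (by norm_num) h

lemma half_pow_pos (a : ℕ) : (0:ℝ) < (1/2)^a := by positivity

lemma sigma_eq_half_pow {σ : ℕ+ → ℝ}
    (hσ : ∀ n : ℕ+, σ n = (2:ℝ)^(-(Nat.log 2 (n:ℕ) : ℤ))) (n : ℕ+) :
    σ n = (1/2:ℝ)^(Nat.log 2 (n:ℕ)) := by
  rw [hσ n, zpow_neg, zpow_natCast, one_div, inv_pow]

lemma sigma_prod {σ : ℕ+ → ℝ}
    (hσ : ∀ n : ℕ+, σ n = (2:ℝ)^(-(Nat.log 2 (n:ℕ) : ℤ))) (d : ℕ) (x : Fin d → ℕ+) :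
    ∏ j, σ (x j) = (1/2:ℝ)^(∑ j, Nat.log 2 ((x j : ℕ))) := by
  calc ∏ j, σ (x j) = ∏ j, (1/2:ℝ)^(Nat.log 2 ((x j : ℕ))) := by
        apply Finset.prod_congr rfl
        intro j _
        exact sigma_eq_half_pow hσ (x j)
    _ = (1/2:ℝ)^(∑ j, Nat.log 2 ((x j : ℕ))) := Finset.prod_pow_eq_pow_sum _ _ _

lemma level_prod_eq {σ : ℕ+ → ℝ}
    (hσ : ∀ n : ℕ+, σ n = (2:ℝ)^(-(Nat.log 2 (n:ℕ) : ℤ))) (d k : ℕ) :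
    {x : Fin d → ℕ+ | (1/2:ℝ)^k ≤ ∏ j, σ (x j)} = S d k := by
  ext x
  rw [Set.mem_setOf_eq, sigma_prod hσ d x, half_pow_le_iff]
  rfl

lemma level_prod_eq' {σ : ℕ+ → ℝ}
    (hσ : ∀ n : ℕ+, σ n = (2:ℝ)^(-(Nat.log 2 (n:ℕ) : ℤ))) (d k : ℕ) (t : ℝ)
    (h1 : (1/2:ℝ)^(k+1) < t) (h2 : t ≤ (1/2:ℝ)^k) :
    {x : Fin d → ℕ+ | t ≤ ∏ j, σ (x j)} = S d k := by
  ext x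
  rw [Set.mem_setOf_eq, sigma_prod hσ d x]
  show _ ↔ ∑ j, Nat.log 2 ((x j : ℕ)) ≤ k
  constructor
  · intro h
    have := lt_of_lt_of_le h1 h
    have hs := (pow_lt_pow_iff_right_of_lt_one₀ (show (0:ℝ) < 1/2 by norm_num)
      (by norm_num)).mp this
    omega
  · intro h
    exact le_trans h2 (half_pow_le_iff.mpr h)

lemma pnat_le_finite (N : ℕ) : {n : ℕ+ | (n:ℕ) ≤ N}.Finite := by
  have : {n : ℕ+ | (n:ℕ) ≤ N} = {n : ℕ+ | (n:ℕ) < N + 1} := by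
    ext n; simp [Nat.lt_succ_iff]
  rw [this]; exact pnat_lt_finite (N+1)

lemma lowerset_eq {T : Set ℕ+} (hT : ∀ m m' : ℕ+, m ≤ m' → m' ∈ T → m ∈ T)
    (hfin : T.Finite) : T = {n : ℕ+ | (n:ℕ) ≤ T.ncard} := by
  ext n
  simp only [Set.mem_setOf_eq]
  constructor
  · intro hn
    have hsub : {m : ℕ+ | (m:ℕ) ≤ (n:ℕ)} ⊆ T := by
      intro m hm
      exact hT m n (by exact_mod_cast hm) hn
    have := Set.ncard_le_ncard hsub hfin
    rwa [ncard_pnat_le] at this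
  · intro hn
    by_contra hnT
    have hsub : T ⊆ {m : ℕ+ | (m:ℕ) < (n:ℕ)} := by
      intro m hm
      simp only [Set.mem_setOf_eq]
      by_contra hmn
      push_neg at hmn
      exact hnT (hT n m (by exact_mod_cast hmn) hm)
    have := Set.ncard_le_ncard hsub (pnat_lt_finite _)
    rw [ncard_pnat_lt] at this
    have hp := n.pos
    omega

/-- The block index of `n`. -/
def Lf (e : ℕ) (n : ℕ+) : ℕ :=
  Nat.find (⟨(n:ℕ), le_trans (Nat.le_of_lt (Nat.lt_two_pow_self))
    (pow_le_M e (n:ℕ))⟩ : ∃ k, (n:ℕ) ≤ M e k)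

lemma Lf_spec (e : ℕ) (n : ℕ+) : (n:ℕ) ≤ M e (Lf e n) :=
  Nat.find_spec (⟨(n:ℕ), le_trans (Nat.le_of_lt (Nat.lt_two_pow_self))
    (pow_le_M e (n:ℕ))⟩ : ∃ k, (n:ℕ) ≤ M e k)

lemma Lf_min (e : ℕ) (n : ℕ+) {k : ℕ} (hk : k < Lf e n) : M e k < (n:ℕ) := by
  have := Nat.find_min (⟨(n:ℕ), le_trans (Nat.le_of_lt (Nat.lt_two_pow_self))
    (pow_le_M e (n:ℕ))⟩ : ∃ k, (n:ℕ) ≤ M e k) hk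
  omega

lemma Lf_le_iff (e : ℕ) (n : ℕ+) (k : ℕ) : Lf e n ≤ k ↔ (n:ℕ) ≤ M e k := by
  constructor
  · intro h
    exact le_trans (Lf_spec e n) ((M_strictMono e).monotone h)
  · intro h
    by_contra hk
    push_neg at hk
    exact absurd h (not_le.mpr (Lf_min e n hk))

section PartB

variable {e : ℕ} {σ τ : ℕ+ → ℝ}
variable (hσ : ∀ n : ℕ+, σ n = (2:ℝ)^(-(Nat.log 2 (n:ℕ) : ℤ)))
variable (hτa : Antitone τ)
variable (hre : ∀ t : ℝ, 0 < t →
      {n : ℕ+ | t ≤ τ n}.ncard = {x : Fin (e+1) → ℕ+ | t ≤ ∏ j, σ (x j)}.ncard)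

include hσ hτa hre

lemma tau_level (k : ℕ) :
    {n : ℕ+ | (1/2:ℝ)^k ≤ τ n} = {n : ℕ+ | (n:ℕ) ≤ M e k} := by
  have hcard : {n : ℕ+ | (1/2:ℝ)^k ≤ τ n}.ncard = M e k := by
    rw [hre _ (half_pow_pos k), level_prod_eq hσ, countS]
  have hlower : ∀ m m' : ℕ+, m ≤ m' → m' ∈ {n : ℕ+ | (1/2:ℝ)^k ≤ τ n} →
      m ∈ {n : ℕ+ | (1/2:ℝ)^k ≤ τ n} := by
    intro m m' hle hm'
    exact le_trans hm' (hτa hle)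
  have hfin : {n : ℕ+ | (1/2:ℝ)^k ≤ τ n}.Finite := by
    by_contra hinf
    have hinf' : {n : ℕ+ | (1/2:ℝ)^k ≤ τ n}.Infinite := hinf
    rw [hinf'.ncard] at hcard
    have := M_pos e k
    omega
  rw [lowerset_eq hlower hfin, hcard]

lemma tau_ge (n : ℕ+) : (1/2:ℝ)^(Lf e n) ≤ τ n := by
  have := tau_level hσ hτa hre (e := e) (Lf e n)
  have hn : n ∈ {m : ℕ+ | (m:ℕ) ≤ M e (Lf e n)} := Lf_spec e n
  rw [← this] at hn
  exact hn

lemma tau_le (n : ℕ+) : τ n ≤ (1/2:ℝ)^(Lf e n) := by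
  by_contra hlt
  push_neg at hlt
  rcases Nat.eq_zero_or_pos (Lf e n) with h0 | hpos
  · -- τ n > 1
    rw [h0] at hlt
    have ht : (0:ℝ) < τ n := lt_trans (by norm_num) hlt
    have hcard := hre (τ n) ht
    have hempty : {x : Fin (e+1) → ℕ+ | τ n ≤ ∏ j, σ (x j)} = ∅ := by
      ext x
      simp only [Set.mem_setOf_eq, Set.mem_empty_iff_false, iff_false, not_le]
      calc ∏ j, σ (x j) = (1/2:ℝ)^(∑ j, Nat.log 2 ((x j : ℕ))) := sigma_prod hσ _ x
        _ ≤ 1 := by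
            apply pow_le_one₀ <;> norm_num
        _ < τ n := by simpa using hlt
    rw [hempty, Set.ncard_empty] at hcard
    have hsub : {m : ℕ+ | τ n ≤ τ m} ⊆ {m : ℕ+ | (1/2:ℝ)^(0:ℕ) ≤ τ m} := by
      intro m hm
      simp only [Set.mem_setOf_eq] at hm ⊢
      calc (1/2:ℝ)^(0:ℕ) = 1 := by norm_num
        _ ≤ τ n := le_of_lt hlt
        _ ≤ τ m := hm
    have hfin : {m : ℕ+ | τ n ≤ τ m}.Finite := by
      apply Set.Finite.subset _ hsub
      rw [tau_level hσ hτa hre]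
      exact pnat_le_finite _
    have : 0 < {m : ℕ+ | τ n ≤ τ m}.ncard :=
      (Set.ncard_pos hfin).mpr ⟨n, show τ n ≤ τ n from le_refl _⟩
    omega
  · -- Lf e n = k+1
    obtain ⟨k, hk⟩ : ∃ k, Lf e n = k + 1 := ⟨Lf e n - 1, by omega⟩
    rw [hk] at hlt
    set t : ℝ := min (τ n) ((1/2:ℝ)^k) with htdef
    have ht1 : (1/2:ℝ)^(k+1) < t := by
      apply lt_min hlt
      exact (pow_lt_pow_iff_right_of_lt_one₀ (by norm_num) (by norm_num)).mpr (by omega)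
    have ht2 : t ≤ (1/2:ℝ)^k := min_le_right _ _
    have htpos : 0 < t := lt_trans (half_pow_pos (k+1)) ht1
    have hcard := hre t htpos
    rw [level_prod_eq' hσ (e+1) k t ht1 ht2, countS] at hcard
    have hlower : ∀ m m' : ℕ+, m ≤ m' → m' ∈ {m : ℕ+ | t ≤ τ m} →
        m ∈ {m : ℕ+ | t ≤ τ m} := fun m m' hle hm' => le_trans hm' (hτa hle)
    have hfin : {m : ℕ+ | t ≤ τ m}.Finite := by
      have hsub : {m : ℕ+ | t ≤ τ m} ⊆ {m : ℕ+ | (1/2:ℝ)^(k+1) ≤ τ m} := by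
        intro m hm
        exact le_of_lt (lt_of_lt_of_le ht1 hm)
      apply Set.Finite.subset _ hsub
      rw [tau_level hσ hτa hre]
      exact pnat_le_finite _
    have hmem : n ∈ {m : ℕ+ | t ≤ τ m} := show t ≤ τ n from min_le_left _ _
    rw [lowerset_eq hlower hfin, hcard] at hmem
    have : M e k < (n:ℕ) := Lf_min e n (by omega)
    simp only [Set.mem_setOf_eq] at hmem
    omega

lemma tau_eq (n : ℕ+) : τ n = (1/2:ℝ)^(Lf e n) :=
  le_antisymm (tau_le hσ hτa hre n) (tau_ge hσ hτa hre n)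

end PartB

lemma asc_prod (n : ℕ) : ∀ e : ℕ, n.ascFactorial e = ∏ t ∈ Finset.range e, (n + t)
  | 0 => by simp [Nat.ascFactorial_zero]
  | e+1 => by
    rw [Nat.ascFactorial_succ, Finset.prod_range_succ, asc_prod n e]
    ring

lemma choose_cast_eq (e m : ℕ) :
    (((m + e).choose e : ℕ) : ℝ)
      = (∏ t ∈ Finset.range e, ((m:ℝ) + 1 + t)) / (e.factorial : ℝ) := by
  have h : e.factorial * (m + e).choose e = ∏ t ∈ Finset.range e, (m + 1 + t) := by
    rw [← Nat.ascFactorial_eq_factorial_mul_choose, asc_prod]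
  have hcast : ((e.factorial * (m + e).choose e : ℕ) : ℝ)
      = ((∏ t ∈ Finset.range e, (m + 1 + t) : ℕ) : ℝ) := by exact_mod_cast h
  push_cast at hcast
  rw [eq_div_iff (by exact_mod_cast e.factorial_pos.ne')]
  rw [← hcast]; ring

lemma tendsto_ratio_one (c : ℝ) :
    Tendsto (fun k : ℕ => ((k:ℝ) + c) / (k:ℝ)) atTop (nhds 1) := by
  have h1 : Tendsto (fun k : ℕ => 1 + c * (1/(k:ℝ))) atTop (nhds (1 + c * 0)) :=
    tendsto_const_nhds.add (tendsto_one_div_atTop_nhds_zero_nat.const_mul c)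
  rw [mul_zero, add_zero] at h1
  apply h1.congr'
  filter_upwards [Filter.eventually_ge_atTop 1] with k hk
  have hk0 : (k:ℝ) ≠ 0 := by positivity
  field_simp

lemma choose_div_tendsto (e i : ℕ) :
    Tendsto (fun k : ℕ => (((k - i + e).choose e : ℕ) : ℝ) / (k:ℝ)^e) atTop
      (nhds (1 / (e.factorial : ℝ))) := by
  have hprod : Tendsto (fun k : ℕ => ∏ t ∈ Finset.range e, (((k:ℝ) + (1 + t - i)) / (k:ℝ)))
      atTop (nhds 1) := by
    have := tendsto_finset_prod (f := fun (t : ℕ) (k : ℕ) => ((k:ℝ) + (1 + t - i)) / (k:ℝ))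
      (x := atTop) (a := fun _ => (1:ℝ)) (Finset.range e)
      (fun t _ => tendsto_ratio_one (1 + t - i))
    simpa using this
  have hmain : Tendsto (fun k : ℕ =>
      (∏ t ∈ Finset.range e, (((k:ℝ) + (1 + t - i)) / (k:ℝ))) * (1 / e.factorial))
      atTop (nhds (1 * (1 / e.factorial))) := hprod.mul_const _
  rw [one_mul] at hmain
  apply hmain.congr'
  filter_upwards [Filter.eventually_ge_atTop (i + 1)] with k hk
  have hki : i ≤ k := by omega
  have hk1 : 1 ≤ k := by omega
  have hk0 : (k:ℝ) ≠ 0 := by positivity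
  rw [choose_cast_eq e (k - i)]
  have hcast : ((k - i : ℕ) : ℝ) = (k:ℝ) - i := by
    rw [Nat.cast_sub hki]
  rw [hcast]
  rw [Finset.prod_div_distrib, Finset.prod_const]
  have hre : ∏ t ∈ Finset.range e, ((k:ℝ) + (1 + (t:ℝ) - i))
      = ∏ t ∈ Finset.range e, ((k:ℝ) - i + 1 + t) := by
    apply Finset.prod_congr rfl; intro t _; ring
  rw [hre, Finset.card_range, div_div]
  ring

lemma two_pow_cancel {k i : ℕ} (h : i ≤ k) : (2:ℝ)^(k-i) * (1/2:ℝ)^k = (1/2:ℝ)^i := by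
  have h2 : (2:ℝ)^(k-i) * (2:ℝ)^i = (2:ℝ)^k := by
    rw [← pow_add]; congr 1; omega
  have hp : (0:ℝ) < 2^k := by positivity
  simp only [one_div, inv_pow]
  field_simp
  linarith [h2]

/-- The dominated-convergence setup function. -/
noncomputable def gfun (e : ℕ) (k i : ℕ) : ℝ :=
  if i ≤ k ∧ 1 ≤ k then (1/2:ℝ)^i * (((k - i + e).choose e : ℕ) : ℝ) / (k:ℝ)^e else 0

lemma gfun_eq_zero {e k i : ℕ} (h : ¬(i ≤ k ∧ 1 ≤ k)) : gfun e k i = 0 := if_neg h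

lemma tendsto_A (e : ℕ) :
    Tendsto (fun k : ℕ => (M e k : ℝ) * (1/2:ℝ)^k / (k:ℝ)^e) atTop
      (nhds (2 / (e.factorial : ℝ))) := by
  have hbound : ∀ k : ℕ, ∀ i : ℕ, ‖gfun e k i‖ ≤ (1/2:ℝ)^i * ((e:ℝ)+1)^e := by
    intro k i
    by_cases h : i ≤ k ∧ 1 ≤ k
    · rw [gfun, if_pos h]
      have hC : ((k - i + e).choose e) ≤ (e+1)^e * k^e := by
        have h3 : e ≤ e * k := Nat.le_mul_of_pos_right e h.2
        have h4 : (e+1) * k = e * k + k := by ring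
        calc (k - i + e).choose e ≤ (k - i + e)^e := choose_le e (k-i)
          _ ≤ ((e+1) * k)^e := Nat.pow_le_pow_left (by omega) e
          _ = (e+1)^e * k^e := by rw [mul_pow]
      have hCcast : (((k - i + e).choose e : ℕ) : ℝ) ≤ ((e:ℝ)+1)^e * (k:ℝ)^e := by
        have := hC
        exact_mod_cast this
      have hknz : (0:ℝ) < (k:ℝ)^e := by
        have : 0 < k := h.2
        positivity
      have hnonneg : (0:ℝ) ≤ (1/2:ℝ)^i * (((k - i + e).choose e : ℕ) : ℝ) / (k:ℝ)^e := by
        positivity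
      rw [Real.norm_eq_abs, abs_of_nonneg hnonneg]
      rw [div_le_iff₀ hknz]
      calc (1/2:ℝ)^i * (((k - i + e).choose e : ℕ) : ℝ)
          ≤ (1/2:ℝ)^i * (((e:ℝ)+1)^e * (k:ℝ)^e) := by
            apply mul_le_mul_of_nonneg_left hCcast (by positivity)
        _ = (1/2:ℝ)^i * ((e:ℝ)+1)^e * (k:ℝ)^e := by ring
    · rw [gfun_eq_zero h, norm_zero]
      positivity
  have hab : ∀ i : ℕ, Tendsto (fun k => gfun e k i) atTop
      (nhds ((1/2:ℝ)^i * (1 / (e.factorial : ℝ)))) := by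
    intro i
    have h1 : Tendsto (fun k : ℕ => (1/2:ℝ)^i * ((((k - i + e).choose e : ℕ) : ℝ) / (k:ℝ)^e))
        atTop (nhds ((1/2:ℝ)^i * (1 / (e.factorial : ℝ)))) :=
      (choose_div_tendsto e i).const_mul _
    apply h1.congr'
    filter_upwards [Filter.eventually_ge_atTop (i+1)] with k hk
    rw [gfun, if_pos ⟨by omega, by omega⟩]
    ring
  have hsum : Summable (fun i : ℕ => (1/2:ℝ)^i * ((e:ℝ)+1)^e) :=
    (summable_geometric_of_lt_one (by norm_num) (by norm_num)).mul_right _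
  have hmain := tendsto_tsum_of_dominated_convergence hsum hab
    (Filter.Eventually.of_forall hbound)
  have htsum : ∑' i : ℕ, (1/2:ℝ)^i * (1 / (e.factorial : ℝ)) = 2 / (e.factorial : ℝ) := by
    rw [tsum_mul_right, tsum_geometric_of_lt_one (by norm_num) (by norm_num),
      div_eq_mul_inv]
    norm_num
    rw [div_eq_mul_inv]
  rw [htsum] at hmain
  apply hmain.congr'
  filter_upwards [Filter.eventually_ge_atTop 1] with k hk
  -- show ∑' i, gfun e k i = M e k * (1/2)^k / k^e
  have hfin : ∑' i, gfun e k i = ∑ i ∈ Finset.range (k+1), gfun e k i := by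
    apply tsum_eq_sum
    intro i hi
    rw [Finset.mem_range] at hi
    exact gfun_eq_zero (by omega)
  rw [hfin]
  have hMcast : (M e k : ℝ) = ∑ j ∈ Finset.range (k+1), (2:ℝ)^j * ((j+e).choose e : ℕ) := by
    rw [M]; push_cast; rfl
  have hrefl : ∑ i ∈ Finset.range (k+1),
        ((2:ℝ)^(k - i) * (((k - i + e).choose e : ℕ) : ℝ) * ((1/2:ℝ)^k / (k:ℝ)^e))
      = ∑ j ∈ Finset.range (k+1), ((2:ℝ)^j * (((j+e).choose e : ℕ) : ℝ) * ((1/2:ℝ)^k / (k:ℝ)^e)) := by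
    have := Finset.sum_range_reflect
      (fun j => (2:ℝ)^j * (((j+e).choose e : ℕ) : ℝ) * ((1/2:ℝ)^k / (k:ℝ)^e)) (k+1)
    have heq : ∀ i ∈ Finset.range (k+1), k + 1 - 1 - i = k - i := fun i _ => by omega
    calc ∑ i ∈ Finset.range (k+1),
          ((2:ℝ)^(k - i) * (((k - i + e).choose e : ℕ) : ℝ) * ((1/2:ℝ)^k / (k:ℝ)^e))
        = ∑ i ∈ Finset.range (k+1),
          ((2:ℝ)^(k+1-1-i) * (((k+1-1-i + e).choose e : ℕ) : ℝ) * ((1/2:ℝ)^k / (k:ℝ)^e)) := by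
          apply Finset.sum_congr rfl
          intro i hi
          rw [heq i hi]
      _ = _ := this
  have hsum2 : ∑ i ∈ Finset.range (k+1), gfun e k i
      = ∑ i ∈ Finset.range (k+1),
          ((2:ℝ)^(k - i) * (((k - i + e).choose e : ℕ) : ℝ) * ((1/2:ℝ)^k / (k:ℝ)^e)) := by
    apply Finset.sum_congr rfl
    intro i hi
    rw [Finset.mem_range] at hi
    rw [gfun, if_pos ⟨by omega, by omega⟩]
    rw [show (2:ℝ)^(k-i) * (((k - i + e).choose e : ℕ) : ℝ) * ((1/2:ℝ)^k / (k:ℝ)^e)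
        = ((2:ℝ)^(k-i) * (1/2:ℝ)^k) * (((k - i + e).choose e : ℕ) : ℝ) / (k:ℝ)^e by ring]
    rw [two_pow_cancel (by omega : i ≤ k)]
  rw [hsum2, hrefl, hMcast, Finset.sum_mul, Finset.sum_div]
  apply Finset.sum_congr rfl
  intro j _
  ring

lemma tendsto_natCast_sub_one : Tendsto (fun k : ℕ => (k:ℝ) - 1) atTop atTop :=
  tendsto_atTop_add_const_right atTop (-1:ℝ) tendsto_natCast_atTop_atTop

lemma tendsto_ratio_one_real (c : ℝ) :
    Tendsto (fun x : ℝ => (x + c) / x) atTop (nhds 1) := by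
  have h1 : Tendsto (fun x : ℝ => 1 + c * x⁻¹) atTop (nhds (1 + c * 0)) :=
    tendsto_const_nhds.add (tendsto_inv_atTop_zero.const_mul c)
  rw [mul_zero, add_zero] at h1
  apply h1.congr'
  filter_upwards [Filter.eventually_ge_atTop 1] with x hx
  have hx0 : x ≠ 0 := by linarith
  field_simp

lemma tendsto_k_div_k_sub_one : Tendsto (fun k : ℕ => (k:ℝ) / ((k:ℝ) - 1)) atTop (nhds 1) := by
  have := (tendsto_ratio_one_real 1).comp tendsto_natCast_sub_one
  apply this.congr
  intro k
  show ((k:ℝ) - 1 + 1) / ((k:ℝ) - 1) = _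
  ring_nf

lemma tendsto_k_sub_one_div_k : Tendsto (fun k : ℕ => ((k:ℝ) - 1) / (k:ℝ)) atTop (nhds 1) := by
  have := tendsto_ratio_one (-1)
  apply this.congr
  intro k
  ring_nf

lemma logM_ge (e k : ℕ) : (k:ℝ) * Real.log 2 ≤ Real.log (M e k) := by
  have h1 : ((2:ℝ))^k ≤ (M e k : ℝ) := by exact_mod_cast pow_le_M e k
  have := Real.log_le_log (by positivity) h1
  rwa [Real.log_pow] at this

lemma logM_pos {e k : ℕ} (hk : 1 ≤ k) : 0 < Real.log (M e k) := by
  have := logM_ge e k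
  have h2 : 0 < Real.log 2 := Real.log_pos (by norm_num)
  have h3 : (1:ℝ) ≤ (k:ℝ) := by exact_mod_cast hk
  nlinarith

lemma tendsto_logM (e : ℕ) :
    Tendsto (fun k : ℕ => Real.log (M e k) / (k:ℝ)) atTop (nhds (Real.log 2)) := by
  set upper : ℕ → ℝ := fun k =>
    Real.log 2 * (((k:ℝ)+1)/(k:ℝ)) + (e:ℝ) * (Real.log ((k:ℝ)+e) / (k:ℝ)) with hup
  have hupper_tendsto : Tendsto upper atTop (nhds (Real.log 2)) := by
    have hke : Tendsto (fun k : ℕ => (k:ℝ) + e) atTop atTop :=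
      tendsto_atTop_add_const_right atTop (e:ℝ) tendsto_natCast_atTop_atTop
    have h2 : Tendsto (fun k : ℕ => Real.log ((k:ℝ)+e) / ((k:ℝ)+e)) atTop (nhds 0) :=
      (Real.isLittleO_log_id_atTop.tendsto_div_nhds_zero).comp hke
    have h3 : Tendsto (fun k : ℕ => ((k:ℝ)+e) / (k:ℝ)) atTop (nhds 1) :=
      tendsto_ratio_one e
    have h4 : Tendsto (fun k : ℕ =>
        (Real.log ((k:ℝ)+e) / ((k:ℝ)+e)) * (((k:ℝ)+e) / (k:ℝ))) atTop (nhds (0 * 1)) :=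
      h2.mul h3
    rw [zero_mul] at h4
    have h5 : Tendsto (fun k : ℕ => Real.log ((k:ℝ)+e) / (k:ℝ)) atTop (nhds 0) := by
      apply h4.congr'
      filter_upwards [Filter.eventually_ge_atTop 1] with k hk
      have hk0 : (k:ℝ) ≠ 0 := by
        have : (1:ℝ) ≤ (k:ℝ) := by exact_mod_cast hk
        linarith
      have hke0 : (k:ℝ) + e ≠ 0 := by positivity
      field_simp
    have := ((tendsto_ratio_one 1).const_mul (Real.log 2)).add (h5.const_mul (e:ℝ))
    rw [mul_one, mul_zero, add_zero] at this
    exact this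
  have hlower_ev : ∀ᶠ k : ℕ in atTop, Real.log 2 ≤ Real.log (M e k) / (k:ℝ) := by
    filter_upwards [Filter.eventually_ge_atTop 1] with k hk
    have hk0 : (0:ℝ) < (k:ℝ) := by exact_mod_cast hk
    rw [le_div_iff₀ hk0]
    calc Real.log 2 * (k:ℝ) = (k:ℝ) * Real.log 2 := by ring
      _ ≤ Real.log (M e k) := logM_ge e k
  have hupper_ev : ∀ᶠ k : ℕ in atTop, Real.log (M e k) / (k:ℝ) ≤ upper k := by
    filter_upwards [Filter.eventually_ge_atTop 1] with k hk
    have hk0 : (0:ℝ) < (k:ℝ) := by exact_mod_cast hk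
    have hMle : (M e k : ℝ) ≤ (2:ℝ)^(k+1) * ((k:ℝ)+e)^e := by
      have := M_le e k
      have hcast : ((2^(k+1) * (k+e)^e : ℕ) : ℝ) = (2:ℝ)^(k+1) * ((k:ℝ)+e)^e := by
        push_cast; ring
      calc (M e k : ℝ) ≤ ((2^(k+1) * (k+e)^e : ℕ) : ℝ) := by exact_mod_cast this
        _ = _ := hcast
    have hlog : Real.log (M e k) ≤ ((k:ℝ)+1) * Real.log 2 + (e:ℝ) * Real.log ((k:ℝ)+e) := by
      have hpos : (0:ℝ) < (M e k : ℝ) := by exact_mod_cast M_pos e k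
      have h1 := Real.log_le_log hpos hMle
      have hke1 : (1:ℝ) ≤ (k:ℝ) + e := by
        have : (1:ℝ) ≤ (k:ℝ) := by exact_mod_cast hk
        have : (0:ℝ) ≤ (e:ℝ) := by positivity
        linarith
      rw [Real.log_mul (by positivity) (by positivity), Real.log_pow, Real.log_pow] at h1
      calc Real.log (M e k) ≤ ((k+1:ℕ):ℝ) * Real.log 2 + (e:ℝ) * Real.log ((k:ℝ)+e) := h1
        _ = ((k:ℝ)+1) * Real.log 2 + (e:ℝ) * Real.log ((k:ℝ)+e) := by push_cast; ring
    rw [div_le_iff₀ hk0, hup]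
    have hexpand : (Real.log 2 * (((k:ℝ)+1)/(k:ℝ)) + (e:ℝ) * (Real.log ((k:ℝ)+e) / (k:ℝ))) * (k:ℝ)
        = ((k:ℝ)+1) * Real.log 2 + (e:ℝ) * Real.log ((k:ℝ)+e) := by
      field_simp
    rw [hexpand]
    exact hlog
  exact tendsto_of_tendsto_of_tendsto_of_le_of_le' tendsto_const_nhds hupper_tendsto
    hlower_ev hupper_ev

lemma tendsto_shape (e : ℕ) {S D : ℕ → ℝ} {a b : ℝ}
    (hS : Tendsto (fun k : ℕ => S k * (1/2:ℝ)^k / (k:ℝ)^e) atTop (nhds a))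
    (hD : Tendsto (fun k : ℕ => (k:ℝ) / D k) atTop (nhds b))
    (hD0 : ∀ᶠ k : ℕ in atTop, D k ≠ 0) :
    Tendsto (fun k : ℕ => S k * (1/2:ℝ)^k / (D k)^e) atTop (nhds (a * b^e)) := by
  have h := hS.mul (hD.pow e)
  apply h.congr'
  filter_upwards [hD0, Filter.eventually_ge_atTop 1] with k hk hk1
  have hk0 : (k:ℝ) ≠ 0 := by
    have : (1:ℝ) ≤ (k:ℝ) := by exact_mod_cast hk1
    linarith
  rw [div_pow]
  field_simp
  rw [mul_assoc, ← mul_pow, div_mul_cancel₀ _ hk]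

lemma tendsto_X (e : ℕ) :
    Tendsto (fun k : ℕ => (M e k : ℝ) * (1/2:ℝ)^k / (Real.log (M e k))^e) atTop
      (nhds ((2 / (e.factorial:ℝ)) * (1 / Real.log 2)^e)) := by
  apply tendsto_shape e (tendsto_A e)
  · have hinv := (tendsto_logM e).inv₀ (ne_of_gt (Real.log_pos (by norm_num)))
    have : Tendsto (fun k : ℕ => (k:ℝ) / Real.log (M e k)) atTop (nhds (Real.log 2)⁻¹) := by
      apply hinv.congr
      intro k
      rw [inv_div]
    rw [show (Real.log 2)⁻¹ = 1 / Real.log 2 by rw [one_div]] at this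
    exact this
  · filter_upwards [Filter.eventually_ge_atTop 1] with k hk
    exact ne_of_gt (logM_pos hk)

lemma tendsto_D_lin (e : ℕ) :
    Tendsto (fun k : ℕ => (k:ℝ) / (((k:ℝ) - 1) * Real.log 2)) atTop
      (nhds (1 / Real.log 2)) := by
  have h := tendsto_k_div_k_sub_one.mul_const (1 / Real.log 2)
  rw [one_mul] at h
  apply h.congr'
  filter_upwards [Filter.eventually_ge_atTop 2] with k hk
  have hk1 : (2:ℝ) ≤ (k:ℝ) := by exact_mod_cast hk
  have hlg : Real.log 2 ≠ 0 := ne_of_gt (Real.log_pos (by norm_num))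
  have hk10 : (k:ℝ) - 1 ≠ 0 := by linarith
  field_simp

lemma tendsto_U (e : ℕ) :
    Tendsto (fun k : ℕ => (M e k : ℝ) * (1/2:ℝ)^k / (((k:ℝ) - 1) * Real.log 2)^e) atTop
      (nhds ((2 / (e.factorial:ℝ)) * (1 / Real.log 2)^e)) := by
  apply tendsto_shape e (tendsto_A e) (tendsto_D_lin e)
  filter_upwards [Filter.eventually_ge_atTop 2] with k hk
  have hk1 : (2:ℝ) ≤ (k:ℝ) := by exact_mod_cast hk
  have hlg : Real.log 2 ≠ 0 := ne_of_gt (Real.log_pos (by norm_num))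
  have hk10 : (k:ℝ) - 1 ≠ 0 := by linarith
  exact mul_ne_zero hk10 hlg

lemma tendsto_SV (e : ℕ) :
    Tendsto (fun k : ℕ => ((M e (k-1) : ℝ) + 1) * (1/2:ℝ)^k / (k:ℝ)^e) atTop
      (nhds (1 / (e.factorial:ℝ))) := by
  -- A' m := ((M e m : ℝ)+1) * (1/2)^m / m^e → 2/e!
  have htail : Tendsto (fun m : ℕ => (1/2:ℝ)^m / (m:ℝ)^e) atTop (nhds 0) := by
    apply tendsto_of_tendsto_of_tendsto_of_le_of_le' tendsto_const_nhds
      (tendsto_pow_atTop_nhds_zero_of_lt_one (by norm_num) (by norm_num) :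
        Tendsto (fun m : ℕ => (1/2:ℝ)^m) atTop (nhds 0))
    · filter_upwards [Filter.eventually_ge_atTop 1] with m hm
      positivity
    · filter_upwards [Filter.eventually_ge_atTop 1] with m hm
      have h1 : (1:ℝ) ≤ (m:ℝ)^e := by
        apply one_le_pow₀
        exact_mod_cast hm
      rw [div_le_iff₀ (by positivity)]
      calc (1/2:ℝ)^m = (1/2:ℝ)^m * 1 := by ring
        _ ≤ (1/2:ℝ)^m * (m:ℝ)^e := by
            apply mul_le_mul_of_nonneg_left h1 (by positivity)
  have hA' : Tendsto (fun m : ℕ => ((M e m : ℝ) + 1) * (1/2:ℝ)^m / (m:ℝ)^e) atTop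
      (nhds (2 / (e.factorial:ℝ))) := by
    have := (tendsto_A e).add htail
    rw [add_zero] at this
    apply this.congr
    intro m
    ring
  have hcomp : Tendsto (fun k : ℕ => ((M e (k-1) : ℝ) + 1) * (1/2:ℝ)^(k-1) / (((k-1):ℕ):ℝ)^e)
      atTop (nhds (2 / (e.factorial:ℝ))) := hA'.comp (tendsto_sub_atTop_nat 1)
  have hmain := (hcomp.mul ((tendsto_k_sub_one_div_k).pow e)).mul_const (1/2:ℝ)
  have hval : 2 / (e.factorial:ℝ) * 1^e * (1/2:ℝ) = 1 / (e.factorial:ℝ) := by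
    rw [one_pow]; ring
  rw [hval] at hmain
  apply hmain.congr'
  filter_upwards [Filter.eventually_ge_atTop 2] with k hk
  have hcast : (((k-1):ℕ):ℝ) = (k:ℝ) - 1 := by
    rw [Nat.cast_sub (by omega)]
    norm_num
  have hk1 : (2:ℝ) ≤ (k:ℝ) := by exact_mod_cast hk
  have hk10 : (k:ℝ) - 1 ≠ 0 := by linarith
  have hk0 : (k:ℝ) ≠ 0 := by linarith
  rw [hcast]
  rw [div_pow]
  field_simp
  have h2pow : (2:ℝ)^(k-1) * 2 = (2:ℝ)^k := by
    rw [← pow_succ]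
    congr 1
    omega
  rw [one_pow, div_pow, one_div, inv_pow, ← h2pow]
  field_simp
lemma tendsto_V (e : ℕ) :
    Tendsto (fun k : ℕ => ((M e (k-1) : ℝ) + 1) * (1/2:ℝ)^k / (Real.log (M e k))^e) atTop
      (nhds ((1 / (e.factorial:ℝ)) * (1 / Real.log 2)^e)) := by
  apply tendsto_shape e (tendsto_SV e)
  · have hinv := (tendsto_logM e).inv₀ (ne_of_gt (Real.log_pos (by norm_num)))
    have : Tendsto (fun k : ℕ => (k:ℝ) / Real.log (M e k)) atTop (nhds (Real.log 2)⁻¹) := by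
      apply hinv.congr
      intro k
      rw [inv_div]
    rw [show (Real.log 2)⁻¹ = 1 / Real.log 2 by rw [one_div]] at this
    exact this
  · filter_upwards [Filter.eventually_ge_atTop 1] with k hk
    exact ne_of_gt (logM_pos hk)

lemma tendsto_W (e : ℕ) :
    Tendsto (fun k : ℕ => ((M e (k-1) : ℝ) + 1) * (1/2:ℝ)^k / (((k:ℝ) - 1) * Real.log 2)^e) atTop
      (nhds ((1 / (e.factorial:ℝ)) * (1 / Real.log 2)^e)) := by
  apply tendsto_shape e (tendsto_SV e) (tendsto_D_lin e)
  filter_upwards [Filter.eventually_ge_atTop 2] with k hk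
  have hk1 : (2:ℝ) ≤ (k:ℝ) := by exact_mod_cast hk
  have hlg : Real.log 2 ≠ 0 := ne_of_gt (Real.log_pos (by norm_num))
  have hk10 : (k:ℝ) - 1 ≠ 0 := by linarith
  exact mul_ne_zero hk10 hlg

lemma tendsto_Lf (e : ℕ) : Tendsto (fun n : ℕ+ => Lf e n) atTop atTop := by
  rw [tendsto_atTop_atTop]
  intro K
  refine ⟨⟨M e K + 1, by omega⟩, fun n hn => ?_⟩
  have hcoe : M e K + 1 ≤ (n:ℕ) := hn
  by_contra hK
  push_neg at hK
  have := (Lf_le_iff e n K).mp (by omega)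
  omega

lemma main_asymp (e : ℕ) (τ : ℕ+ → ℝ)
    (htau : ∀ n : ℕ+, τ n = (1/2:ℝ)^(Lf e n)) :
    Filter.limsup (fun n : ℕ+ => τ n * ((n:ℕ):ℝ) / (Real.log ((n:ℕ):ℝ))^e) Filter.atTop
        = 2 * (1 / Real.log 2)^e / (e.factorial : ℝ) ∧
    Filter.liminf (fun n : ℕ+ => τ n * ((n:ℕ):ℝ) / (Real.log ((n:ℕ):ℝ))^e) Filter.atTop
        = (1 / Real.log 2)^e / (e.factorial : ℝ) := by
  set f : ℕ+ → ℝ := fun n => τ n * ((n:ℕ):ℝ) / (Real.log ((n:ℕ):ℝ))^e with hf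
  set lg := Real.log 2 with hlg
  have hlgpos : 0 < lg := Real.log_pos (by norm_num)
  set c : ℝ := (1 / lg)^e / (e.factorial : ℝ) with hc
  have hcpos : 0 < c := by
    rw [hc]
    have : (0:ℝ) < (e.factorial : ℝ) := by exact_mod_cast e.factorial_pos
    positivity
  have hc2U : (2 / (e.factorial:ℝ)) * (1 / lg)^e = 2 * c := by rw [hc]; ring
  have hc1V : (1 / (e.factorial:ℝ)) * (1 / lg)^e = c := by rw [hc]; ring
  have hU := tendsto_U e
  have hV := tendsto_V e
  have hW := tendsto_W e
  have hX := tendsto_X e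
  rw [← hlg, hc2U] at hU hX
  rw [← hlg, hc1V] at hV hW
  -- nonnegativity
  have hf0 : ∀ n : ℕ+, 0 ≤ f n := by
    intro n
    apply div_nonneg
    · apply mul_nonneg
      · rw [htau n]; positivity
      · positivity
    · apply pow_nonneg
      apply Real.log_nonneg
      exact_mod_cast n.one_le
  -- block bounds
  have hblock : ∀ n : ℕ+, 2 ≤ Lf e n →
      f n ≤ (M e (Lf e n) : ℝ) * (1/2:ℝ)^(Lf e n) / ((((Lf e n):ℝ) - 1) * lg)^e ∧
      ((M e (Lf e n - 1) : ℝ) + 1) * (1/2:ℝ)^(Lf e n) / (Real.log (M e (Lf e n)))^e ≤ f n := by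
    intro n hk2
    set k := Lf e n with hkdef
    have hn_ub : (n:ℕ) ≤ M e k := Lf_spec e n
    have hn_lb : M e (k-1) < (n:ℕ) := Lf_min e n (by omega)
    have hpowle : 2^(k-1) ≤ M e (k-1) := pow_le_M e (k-1)
    have hnn1 : (2:ℝ)^(k-1) ≤ ((n:ℕ):ℝ) := by
      have : (2:ℕ)^(k-1) ≤ (n:ℕ) := by omega
      exact_mod_cast this
    have hnnpos : (0:ℝ) < ((n:ℕ):ℝ) := by exact_mod_cast n.pos
    have hcast : (((k-1):ℕ):ℝ) = (k:ℝ) - 1 := by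
      rw [Nat.cast_sub (by omega)]; norm_num
    have hlogn_lb : ((k:ℝ) - 1) * lg ≤ Real.log ((n:ℕ):ℝ) := by
      have h1 : Real.log ((2:ℝ)^(k-1)) ≤ Real.log ((n:ℕ):ℝ) :=
        Real.log_le_log (by positivity) hnn1
      rwa [Real.log_pow, hcast] at h1
    have hlogn_pos : 0 < Real.log ((n:ℕ):ℝ) := by
      have hk2' : (2:ℝ) ≤ (k:ℝ) := by exact_mod_cast hk2
      nlinarith
    have hlogn_ub : Real.log ((n:ℕ):ℝ) ≤ Real.log (M e k) := by
      apply Real.log_le_log hnnpos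
      exact_mod_cast hn_ub
    have hfeq : f n = (1/2:ℝ)^k * ((n:ℕ):ℝ) / (Real.log ((n:ℕ):ℝ))^e := by
      show τ n * ((n:ℕ):ℝ) / (Real.log ((n:ℕ):ℝ))^e = _
      rw [htau n, ← hkdef]
    constructor
    · rw [hfeq]
      have hd1 : (0:ℝ) < (((k:ℝ) - 1) * lg)^e := by
        have hk2' : (2:ℝ) ≤ (k:ℝ) := by exact_mod_cast hk2
        have : (0:ℝ) < ((k:ℝ) - 1) * lg := by nlinarith
        positivity
      have := div_le_div₀ (c := (M e k : ℝ) * (1/2:ℝ)^k)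
        (by positivity)
        (by
          have : ((n:ℕ):ℝ) ≤ (M e k : ℝ) := by exact_mod_cast hn_ub
          calc (1/2:ℝ)^k * ((n:ℕ):ℝ) ≤ (1/2:ℝ)^k * (M e k : ℝ) := by
                apply mul_le_mul_of_nonneg_left this (by positivity)
            _ = (M e k : ℝ) * (1/2:ℝ)^k := by ring)
        hd1
        (pow_le_pow_left₀ (by
          have hk2' : (2:ℝ) ≤ (k:ℝ) := by exact_mod_cast hk2
          nlinarith) hlogn_lb e)
      exact this
    · rw [hfeq]
      have hd2 : (0:ℝ) < (Real.log ((n:ℕ):ℝ))^e := by positivity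
      have := div_le_div₀ (c := (1/2:ℝ)^k * ((n:ℕ):ℝ))
        (by positivity)
        (by
          have h1 : (M e (k-1) : ℝ) + 1 ≤ ((n:ℕ):ℝ) := by
            have : M e (k-1) + 1 ≤ (n:ℕ) := by omega
            exact_mod_cast this
          calc ((M e (k-1) : ℝ) + 1) * (1/2:ℝ)^k ≤ ((n:ℕ):ℝ) * (1/2:ℝ)^k := by
                apply mul_le_mul_of_nonneg_right h1 (by positivity)
            _ = (1/2:ℝ)^k * ((n:ℕ):ℝ) := by ring)
        hd2
        (pow_le_pow_left₀ (le_of_lt hlogn_pos) hlogn_ub e)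
      exact this
  -- eventual upper bound
  have heub : ∀ ε : ℝ, 0 < ε → ∀ᶠ n : ℕ+ in atTop, f n ≤ 2 * c + ε := by
    intro ε hε
    have hev : ∀ᶠ k : ℕ in atTop,
        (M e k : ℝ) * (1/2:ℝ)^k / (((k:ℝ) - 1) * lg)^e ≤ 2 * c + ε :=
      hU.eventually (eventually_le_nhds (by linarith))
    obtain ⟨K, hK⟩ := Filter.eventually_atTop.mp hev
    filter_upwards [(tendsto_Lf e).eventually_ge_atTop (max K 2)] with n hn
    have h2 : 2 ≤ Lf e n := le_trans (le_max_right _ _) hn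
    have hKn : K ≤ Lf e n := le_trans (le_max_left _ _) hn
    exact le_trans ((hblock n h2).1) (hK _ hKn)
  -- eventual lower bound
  have helb : ∀ ε : ℝ, 0 < ε → ∀ᶠ n : ℕ+ in atTop, c - ε ≤ f n := by
    intro ε hε
    have hev : ∀ᶠ k : ℕ in atTop,
        c - ε ≤ ((M e (k - 1) : ℝ) + 1) * (1/2:ℝ)^k / (Real.log (M e k))^e :=
      hV.eventually (eventually_ge_nhds (by linarith))
    obtain ⟨K, hK⟩ := Filter.eventually_atTop.mp hev
    filter_upwards [(tendsto_Lf e).eventually_ge_atTop (max K 2)] with n hn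
    have h2 : 2 ≤ Lf e n := le_trans (le_max_right _ _) hn
    have hKn : K ≤ Lf e n := le_trans (le_max_left _ _) hn
    exact le_trans (hK _ hKn) ((hblock n h2).2)
  -- subsequence for limsup
  have hfreq2c : ∀ ε : ℝ, 0 < ε → ∃ᶠ n : ℕ+ in atTop, 2 * c - ε ≤ f n := by
    intro ε hε
    set mseq : ℕ → ℕ+ := fun k => ⟨M e k, M_pos e k⟩ with hmseq
    have hmt : Tendsto mseq atTop atTop := by
      rw [tendsto_atTop_atTop]
      intro b
      refine ⟨(b:ℕ), fun k hk => ?_⟩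
      show (b:ℕ) ≤ M e k
      have h1 : 2^k ≤ M e k := pow_le_M e k
      have h2 : k < 2^k := Nat.lt_two_pow_self
      omega
    have hLfm : ∀ k : ℕ, Lf e (mseq k) = k := by
      intro k
      have hle : Lf e (mseq k) ≤ k := (Lf_le_iff e _ k).mpr (le_refl _)
      rcases Nat.eq_zero_or_pos k with rfl | hk
      · omega
      · have : ¬ (Lf e (mseq k) ≤ k - 1) := by
          rw [Lf_le_iff]
          show ¬ (M e k ≤ M e (k-1))
          push_neg
          exact M_strictMono e (by omega)
        omega
    have hfXeq : ∀ k : ℕ, f (mseq k) = (M e k : ℝ) * (1/2:ℝ)^k / (Real.log (M e k))^e := by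
      intro k
      rw [hf]
      show τ (mseq k) * ((M e k : ℕ):ℝ) / (Real.log ((M e k : ℕ):ℝ))^e = _
      rw [htau, hLfm k]
      ring_nf
    have hev : ∀ᶠ k : ℕ in atTop, 2 * c - ε ≤ f (mseq k) := by
      have := hX.eventually (eventually_ge_nhds (by linarith : 2 * c - ε < 2 * c))
      filter_upwards [this] with k hk
      rw [hfXeq k]
      exact hk
    exact hmt.frequently hev.frequently
  -- subsequence for liminf
  have hfreqc : ∀ ε : ℝ, 0 < ε → ∃ᶠ n : ℕ+ in atTop, f n ≤ c + ε := by
    intro ε hε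
    set wseq : ℕ → ℕ+ := fun k => ⟨M e k + 1, by omega⟩ with hwseq
    have hwt : Tendsto wseq atTop atTop := by
      rw [tendsto_atTop_atTop]
      intro b
      refine ⟨(b:ℕ), fun k hk => ?_⟩
      show (b:ℕ) ≤ M e k + 1
      have h1 : 2^k ≤ M e k := pow_le_M e k
      have h2 : k < 2^k := Nat.lt_two_pow_self
      omega
    have hLfw : ∀ k : ℕ, Lf e (wseq k) = k + 1 := by
      intro k
      have hle : Lf e (wseq k) ≤ k + 1 := by
        rw [Lf_le_iff]
        show M e k + 1 ≤ M e (k+1)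
        exact M_strictMono e (by omega)
      have hgt : ¬ (Lf e (wseq k) ≤ k) := by
        rw [Lf_le_iff]
        show ¬ (M e k + 1 ≤ M e k)
        omega
      omega
    have hfWle : ∀ k : ℕ, 1 ≤ k → f (wseq k)
        ≤ ((M e k : ℝ) + 1) * (1/2:ℝ)^(k+1) / ((((k:ℝ)+1) - 1) * lg)^e := by
      intro k hk1
      have hfeq : f (wseq k) = (1/2:ℝ)^(k+1) * ((M e k : ℝ) + 1)
          / (Real.log ((M e k : ℝ) + 1))^e := by
        rw [hf]
        show τ (wseq k) * ((M e k + 1 : ℕ):ℝ) / (Real.log ((M e k + 1 : ℕ):ℝ))^e = _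
        rw [htau, hLfw k]
        push_cast
        ring_nf
      rw [hfeq]
      have hlog_lb : (k:ℝ) * lg ≤ Real.log ((M e k : ℝ) + 1) := by
        have h1 : (2:ℝ)^k ≤ (M e k : ℝ) + 1 := by
          have := pow_le_M e k
          have : (2:ℕ)^k ≤ M e k + 1 := by omega
          exact_mod_cast this
        have := Real.log_le_log (by positivity) h1
        rwa [Real.log_pow] at this
      have hklg : (0:ℝ) < (k:ℝ) * lg := by
        have : (1:ℝ) ≤ (k:ℝ) := by exact_mod_cast hk1
        nlinarith
      have hsimp : (((k:ℝ)+1) - 1) * lg = (k:ℝ) * lg := by ring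
      rw [hsimp]
      have := div_le_div_of_nonneg_left
        (show (0:ℝ) ≤ (1/2:ℝ)^(k+1) * ((M e k : ℝ) + 1) by positivity)
        (show (0:ℝ) < ((k:ℝ) * lg)^e by positivity)
        (pow_le_pow_left₀ (le_of_lt hklg) hlog_lb e)
      calc (1/2:ℝ)^(k+1) * ((M e k : ℝ) + 1) / (Real.log ((M e k : ℝ) + 1))^e
          ≤ (1/2:ℝ)^(k+1) * ((M e k : ℝ) + 1) / ((k:ℝ) * lg)^e := this
        _ = ((M e k : ℝ) + 1) * (1/2:ℝ)^(k+1) / ((k:ℝ) * lg)^e := by ring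
    have hWev : ∀ᶠ j : ℕ in atTop,
        ((M e (j - 1) : ℝ) + 1) * (1/2:ℝ)^j / (((j:ℝ) - 1) * lg)^e ≤ c + ε :=
      hW.eventually (eventually_le_nhds (by linarith))
    obtain ⟨K, hK⟩ := Filter.eventually_atTop.mp hWev
    have hev : ∀ᶠ k : ℕ in atTop, f (wseq k) ≤ c + ε := by
      filter_upwards [Filter.eventually_ge_atTop (max K 1)] with k hk
      have hk1 : 1 ≤ k := le_trans (le_max_right _ _) hk
      have hkK : K ≤ k + 1 := by
        have := le_trans (le_max_left _ _) hk
        omega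
      have h1 := hfWle k hk1
      have h2 := hK (k+1) hkK
      have hsimp : ((k+1 : ℕ) - 1 : ℕ) = k := by omega
      rw [hsimp] at h2
      have hcast : (((k+1):ℕ):ℝ) = (k:ℝ) + 1 := by push_cast; ring
      rw [hcast] at h2
      exact le_trans h1 h2
    exact hwt.frequently hev.frequently
  -- boundedness
  have hbdd_le : Filter.IsBoundedUnder (· ≤ ·) atTop f :=
    ⟨2 * c + 1, Filter.eventually_map.mpr (heub 1 one_pos)⟩
  have hbdd_ge : Filter.IsBoundedUnder (· ≥ ·) atTop f :=
    ⟨0, Filter.eventually_map.mpr (Filter.Eventually.of_forall hf0)⟩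
  have hcob_le : Filter.IsCoboundedUnder (· ≤ ·) atTop f :=
    hbdd_ge.isCoboundedUnder_le
  have hcob_ge : Filter.IsCoboundedUnder (· ≥ ·) atTop f :=
    hbdd_le.isCoboundedUnder_ge
  constructor
  · apply le_antisymm
    · apply le_of_forall_pos_le_add
      intro ε hε
      have h1 : Filter.limsup f atTop ≤ 2 * c + ε := limsup_le_of_le hcob_le (heub ε hε)
      have h2 : 2 * c + ε = 2 * (1/lg)^e / (e.factorial:ℝ) + ε := by rw [hc]; ring
      linarith [h2 ▸ h1]
    · apply le_of_forall_pos_le_add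
      intro ε hε
      have h1 : 2 * c - ε ≤ Filter.limsup f atTop :=
        le_limsup_of_frequently_le (hfreq2c ε hε) hbdd_le
      have h2 : 2 * c = 2 * (1/lg)^e / (e.factorial:ℝ) := by rw [hc]; ring
      linarith [h2 ▸ h1]
  · apply le_antisymm
    · apply le_of_forall_pos_le_add
      intro ε hε
      have h1 : Filter.liminf f atTop ≤ c + ε := liminf_le_of_frequently_le (hfreqc ε hε) hbdd_ge
      have h2 : c = (1/lg)^e / (e.factorial:ℝ) := by rw [hc]
      linarith [h2 ▸ h1]
    · apply le_of_forall_pos_le_add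
      intro ε hε
      have h1 : c - ε ≤ Filter.liminf f atTop := le_liminf_of_le hcob_ge (helb ε hε)
      have h2 : c = (1/lg)^e / (e.factorial:ℝ) := by rw [hc]
      linarith [h2 ▸ h1]
end Stmt12

open Stmt12 in
theorem stmt_12 (d : ℕ) (hd : 1 ≤ d) (σ τ : ℕ+ → ℝ)
    (hσ : ∀ n : ℕ+, σ n = (2 : ℝ) ^ (-(Nat.log 2 (n : ℕ) : ℤ)))
    (hτa : Antitone τ)
    -- τ is the nonincreasing rearrangement of the d-th tensor power of σ
    (hre : ∀ t : ℝ, 0 < t →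
      {n : ℕ+ | t ≤ τ n}.ncard = {x : Fin d → ℕ+ | t ≤ ∏ j, σ (x j)}.ncard) :
    Filter.limsup (fun n : ℕ+ => τ n * ((n : ℕ) : ℝ) / (Real.log ((n : ℕ) : ℝ)) ^ (d - 1))
        Filter.atTop
      = 2 * (1 / Real.log 2) ^ (d - 1) / (Nat.factorial (d - 1) : ℝ) ∧
    Filter.liminf (fun n : ℕ+ => τ n * ((n : ℕ) : ℝ) / (Real.log ((n : ℕ) : ℝ)) ^ (d - 1))
        Filter.atTop
      = (1 / Real.log 2) ^ (d - 1) / (Nat.factorial (d - 1) : ℝ) ∧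
    (2 ≤ d →
      (1 : ℝ) ^ d / (Nat.factorial (d - 1) : ℝ) <
        Filter.liminf (fun n : ℕ+ => τ n * ((n : ℕ) : ℝ) / (Real.log ((n : ℕ) : ℝ)) ^ (d - 1))
          Filter.atTop ∧
      Filter.liminf (fun n : ℕ+ => τ n * ((n : ℕ) : ℝ) / (Real.log ((n : ℕ) : ℝ)) ^ (d - 1))
          Filter.atTop <
        Filter.limsup (fun n : ℕ+ => τ n * ((n : ℕ) : ℝ) / (Real.log ((n : ℕ) : ℝ)) ^ (d - 1))
          Filter.atTop ∧
      Filter.limsup (fun n : ℕ+ => τ n * ((n : ℕ) : ℝ) / (Real.log ((n : ℕ) : ℝ)) ^ (d - 1))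
          Filter.atTop < (2 : ℝ) ^ d / (Nat.factorial (d - 1) : ℝ)) := by
  obtain ⟨e, rfl⟩ : ∃ e, d = e + 1 := ⟨d - 1, by omega⟩
  simp only [Nat.add_sub_cancel]
  have htau : ∀ n : ℕ+, τ n = (1/2:ℝ)^(Lf e n) := tau_eq hσ hτa hre
  obtain ⟨h1, h2⟩ := main_asymp e τ htau
  refine ⟨h1, h2, ?_⟩
  intro hd2
  have he1 : 1 ≤ e := by omega
  rw [h1, h2]
  have hlgpos : (0:ℝ) < Real.log 2 := Real.log_pos (by norm_num)
  have hlg1 : Real.log 2 < 1 := by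
    have := Real.log_two_lt_d9; linarith
  have hlghalf : (1/2:ℝ) < Real.log 2 := by
    have := Real.log_two_gt_d9; linarith
  have hfact : (0:ℝ) < (e.factorial : ℝ) := by exact_mod_cast e.factorial_pos
  have hpow1 : (1:ℝ) < (1 / Real.log 2)^e := by
    apply one_lt_pow₀ _ (by omega)
    rw [lt_div_iff₀ hlgpos]
    linarith
  have hpow2 : (1 / Real.log 2)^e < 2^e := by
    apply pow_lt_pow_left₀ _ (by positivity) (by omega)
    rw [div_lt_iff₀ hlgpos]
    linarith
  refine ⟨?_, ?_, ?_⟩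
  · rw [one_pow, div_lt_div_iff₀ hfact hfact]
    nlinarith
  · rw [div_lt_div_iff₀ hfact hfact]
    nlinarith
  · rw [div_lt_div_iff₀ hfact hfact]
    have h2e : (2:ℝ)^(e+1) = 2 * 2^e := by rw [pow_succ]; ring
    nlinarith
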